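/- Let G be a finite simple graph on vertices {x_1,...,x_n} with no isolated vertex, and let S be an independent set of G. Define the S-suspension G^S by adding a new vertex x_{n+1} and joining x_{n+1} to every vertex of G not in S. Then im(G^S) = im(G). -/
import Mathlib


open MvPolynomial PowerSeries

/-- A matching of a simple graph: a set of pairwise disjoint edges. -/
def IsMatchingSet {V : Type*} (G : SimpleGraph V) (M : Finset (Sym2 V)) : Prop :=
  (↑M : Set (Sym2 V)) ⊆ G.edgeSet ∧
    ∀ e ∈ M, ∀ f ∈ M, e ≠ f → ∀ v, v ∈ e → v ∉ f

/-- An induced matching: a matching such that no edge of `G` meets two distinct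
edges of the matching. -/
def IsInducedMatchingSet {V : Type*} (G : SimpleGraph V) (M : Finset (Sym2 V)) : Prop :=
  IsMatchingSet G M ∧
    ∀ e ∈ G.edgeSet, ∀ f ∈ M, ∀ g ∈ M, f ≠ g →
      ¬((∃ v, v ∈ e ∧ v ∈ f) ∧ (∃ w, w ∈ e ∧ w ∈ g))

/-- The matching number `m(G)`. -/
noncomputable def matchNum {V : Type*} (G : SimpleGraph V) : ℕ :=
  sSup {k | ∃ M : Finset (Sym2 V), IsMatchingSet G M ∧ M.card = k}

/-- The induced matching number `im(G)`. -/
noncomputable def indMatchNum {V : Type*} (G : SimpleGraph V) : ℕ :=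
  sSup {k | ∃ M : Finset (Sym2 V), IsInducedMatchingSet G M ∧ M.card = k}

/-- The `S`-suspension `G^S`: add a new vertex (`none`) joined to every vertex not in `S`. -/
def sSusp {V : Type*} (G : SimpleGraph V) (S : Set V) : SimpleGraph (Option V) :=
  SimpleGraph.fromRel (fun a b =>
    (∃ x y, a = some x ∧ b = some y ∧ G.Adj x y) ∨
    (a = none ∧ ∃ y, b = some y ∧ y ∉ S))

/-- The `{x_i,x_j}, S`-suspension: add a new vertex (`none`) joined to every vertex
outside `S ∪ {i, j}`. -/
def eSusp {V : Type*} (G : SimpleGraph V) (i j : V) (S : Set V) : SimpleGraph (Option V) :=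
  SimpleGraph.fromRel (fun a b =>
    (∃ x y, a = some x ∧ b = some y ∧ G.Adj x y) ∨
    (a = none ∧ ∃ y, b = some y ∧ y ∉ S ∧ y ≠ i ∧ y ≠ j))

/-- The edge ideal of a graph. -/
noncomputable def edgeIdeal (K : Type*) [Field K] {σ : Type*} (G : SimpleGraph σ) :
    Ideal (MvPolynomial σ K) :=
  Ideal.span {p | ∃ i j, G.Adj i j ∧ p = X i * X j}

/-- The Hilbert function of `R/I` (standard grading). -/
noncomputable def hilbFun (K : Type*) [Field K] {σ : Type*}
    (I : Ideal (MvPolynomial σ K)) (n : ℕ) : ℕ :=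
  Module.finrank K ((homogeneousSubmodule σ K n).map
    (Ideal.Quotient.mkₐ K I).toLinearMap)

/-- The Hilbert series of `R/I`, as a power series over `ℚ`. -/
noncomputable def hilbSeries (K : Type*) [Field K] {σ : Type*}
    (I : Ideal (MvPolynomial σ K)) : PowerSeries ℚ :=
  PowerSeries.mk fun n => (hilbFun K I n : ℚ)

/-- `HilbEq K I d h` says that the Hilbert series of `R/I` equals `h(λ)/(1-λ)^d`
with `h(1) ≠ 0`, i.e. `h` is the `h`-polynomial and `d = dim R/I`. -/
def HilbEq (K : Type*) [Field K] {σ : Type*} (I : Ideal (MvPolynomial σ K))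
    (d : ℕ) (h : Polynomial ℤ) : Prop :=
  hilbSeries K I * (1 - PowerSeries.X) ^ d =
    ((h.map (Int.castRingHom ℚ) : Polynomial ℚ) : PowerSeries ℚ) ∧ h.eval 1 ≠ 0

/-- `regBound K I r` : there is a finite graded free resolution of `R/I` all of whose
generator degrees in homological degree `i` are at most `i + r`.  The minimal free
resolution realizes `r = reg(R/I)`, and the generator degrees of any graded free
resolution contain those of the minimal one, hence
`reg(R/I) = sInf {r | regBound K I r}`. -/
noncomputable def regBound (K : Type*) [Field K] {σ : Type*}
    (I : Ideal (MvPolynomial σ K)) (r : ℕ) : Prop :=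
  ∃ (L : ℕ) (k : ℕ → ℕ) (d : (i : ℕ) → Fin (k i) → ℕ)
    (φ : (i : ℕ) → ((Fin (k (i + 1)) →₀ MvPolynomial σ K) →ₗ[MvPolynomial σ K]
      (Fin (k i) →₀ MvPolynomial σ K)))
    (ε : (Fin (k 0) →₀ MvPolynomial σ K) →ₗ[MvPolynomial σ K] (MvPolynomial σ K ⧸ I)),
    (∀ i, L ≤ i → k i = 0) ∧
    (∀ (i : ℕ) (b : Fin (k (i + 1))) (a : Fin (k i)),
      (φ i (Finsupp.single b 1)) a ∈ homogeneousSubmodule σ K (d (i + 1) b - d i a) ∧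
      (d (i + 1) b < d i a → (φ i (Finsupp.single b 1)) a = 0)) ∧
    (∀ a : Fin (k 0), ε (Finsupp.single a 1) ∈
      (homogeneousSubmodule σ K (d 0 a)).map (Ideal.Quotient.mkₐ K I).toLinearMap) ∧
    Function.Surjective ε ∧
    LinearMap.range (φ 0) = LinearMap.ker ε ∧
    (∀ i : ℕ, LinearMap.range (φ (i + 1)) = LinearMap.ker (φ i)) ∧
    (∀ (i : ℕ) (a : Fin (k i)), d i a ≤ i + r)

/-- The Castelnuovo–Mumford regularity of `R/I`. -/
noncomputable def reg (K : Type*) [Field K] {σ : Type*}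
    (I : Ideal (MvPolynomial σ K)) : ℕ :=
  sInf {r | regBound K I r}

/-- the `S`-suspension of a graph with no isolated vertex, over an
independent set `S`, has the same induced matching number. -/
lemma susp_adj_some {V : Type*} (G : SimpleGraph V) (S : Set V) (x y : V) :
    (sSusp G S).Adj (some x) (some y) ↔ G.Adj x y := by
  simp only [sSusp, SimpleGraph.fromRel_adj, ne_eq, Option.some.injEq]
  constructor
  · rintro ⟨hne, h | h⟩
    · rcases h with ⟨a, b, ha, hb, h⟩ | ⟨h, _⟩
      · cases ha; cases hb; exact h
      · exact absurd h (by simp)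
    · rcases h with ⟨a, b, ha, hb, h⟩ | ⟨h, _⟩
      · cases ha; cases hb; exact h.symm
      · exact absurd h (by simp)
  · intro h; exact ⟨fun he => G.ne_of_adj h he, Or.inl (Or.inl ⟨x, y, rfl, rfl, h⟩)⟩

lemma susp_adj_none {V : Type*} (G : SimpleGraph V) (S : Set V) (y : V) :
    (sSusp G S).Adj none (some y) ↔ y ∉ S := by
  simp [sSusp, SimpleGraph.fromRel_adj]

lemma susp_edge {V : Type*} (G : SimpleGraph V) (S : Set V) {e : Sym2 (Option V)}
    (he : e ∈ (sSusp G S).edgeSet) :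
    (∃ x y, e = s(some x, some y) ∧ G.Adj x y) ∨ (∃ y, e = s(none, some y) ∧ y ∉ S) := by
  induction e using Sym2.inductionOn with
  | hf a b =>
    rw [SimpleGraph.mem_edgeSet] at he
    match a, b with
    | some x, some y => exact Or.inl ⟨x, y, rfl, (susp_adj_some G S x y).mp he⟩
    | none, some y => exact Or.inr ⟨y, rfl, (susp_adj_none G S y).mp he⟩
    | some x, none =>
      rw [Sym2.eq_swap]
      exact Or.inr ⟨x, rfl, (susp_adj_none G S x).mp he.symm⟩
    | none, none => exact absurd rfl ((sSusp G S).ne_of_adj he)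

lemma susp_edge_of {V : Type*} (G : SimpleGraph V) (S : Set V) {e : Sym2 V}
    (he : e ∈ G.edgeSet) : Sym2.map some e ∈ (sSusp G S).edgeSet := by
  induction e using Sym2.inductionOn with
  | hf a b =>
    rw [Sym2.map_pair_eq, SimpleGraph.mem_edgeSet] at *
    exact (susp_adj_some G S a b).mpr he

lemma mem_map_some {V : Type*} {e : Sym2 V} {v : V} (h : v ∈ e) :
    some v ∈ Sym2.map some e := Sym2.mem_map.mpr ⟨v, h, rfl⟩

lemma mem_of_map_some {V : Type*} {e : Sym2 V} {v : V} (h : some v ∈ Sym2.map some e) :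
    v ∈ e := by
  obtain ⟨a, ha, hav⟩ := Sym2.mem_map.mp h
  cases Option.some_injective _ hav; exact ha

theorem stmt_2 {V : Type*} [Fintype V] (G : SimpleGraph V)
    (hiso : ∀ v : V, ∃ w, G.Adj v w) (S : Set V)
    (hS : ∀ x ∈ S, ∀ y ∈ S, ¬ G.Adj x y) :
    indMatchNum (sSusp G S) = indMatchNum G := by
  classical
  have key : {k | ∃ M : Finset (Sym2 (Option V)),
        IsInducedMatchingSet (sSusp G S) M ∧ M.card = k}
      = {k | ∃ M : Finset (Sym2 V), IsInducedMatchingSet G M ∧ M.card = k} := by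
    ext k
    simp only [Set.mem_setOf_eq]
    constructor
    · rintro ⟨M, ⟨⟨hsub, hdisj⟩, hind⟩, rfl⟩
      by_cases hnone : ∃ e ∈ M, (none : Option V) ∈ e
      · obtain ⟨e₀, he₀M, hne₀⟩ := hnone
        obtain ⟨x, y, he₀, -⟩ | ⟨y₀, he₀, hy₀S⟩ := susp_edge G S (hsub he₀M)
        · rw [he₀] at hne₀; simp at hne₀
        have hM1 : M = {e₀} := by
          rw [Finset.eq_singleton_iff_unique_mem]
          refine ⟨he₀M, fun f hfM => ?_⟩
          by_contra hfe
          have hnf : (none : Option V) ∉ f := hdisj e₀ he₀M f hfM (Ne.symm hfe) none hne₀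
          obtain ⟨a, b, hf, hab⟩ | ⟨c, hf, -⟩ := susp_edge G S (hsub hfM)
          · have hnotboth : a ∉ S ∨ b ∉ S := by
              by_contra h
              push_neg at h
              exact hS a h.1 b h.2 hab
            rcases hnotboth with ha | hb
            · exact hind s(none, some a) ((susp_adj_none G S a).mpr ha) e₀ he₀M f hfM
                (Ne.symm hfe) ⟨⟨none, by simp, hne₀⟩, ⟨some a, by simp, by simp [hf]⟩⟩
            · exact hind s(none, some b) ((susp_adj_none G S b).mpr hb) e₀ he₀M f hfM
                (Ne.symm hfe) ⟨⟨none, by simp, hne₀⟩, ⟨some b, by simp, by simp [hf]⟩⟩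
          · rw [hf] at hnf; simp at hnf
        obtain ⟨w, hw⟩ := hiso y₀
        refine ⟨{s(y₀, w)}, ⟨⟨?_, ?_⟩, ?_⟩, by simp [hM1]⟩
        · intro e he
          simp only [Finset.coe_singleton, Set.mem_singleton_iff] at he
          rw [he]; exact hw
        · intro e he f hf hef
          simp only [Finset.mem_singleton] at he hf
          exact absurd (he.trans hf.symm) hef
        · intro e he f hf g hg hfg
          simp only [Finset.mem_singleton] at hf hg
          exact absurd (hf.trans hg.symm) hfg
      · push_neg at hnone
        rcases M.eq_empty_or_nonempty with hM | ⟨e₁, he₁⟩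
        · exact ⟨∅, ⟨⟨by simp, by simp⟩, by simp⟩, by simp [hM]⟩
        obtain ⟨d, -, -, -⟩ | ⟨c, hc, -⟩ := susp_edge G S (hsub he₁)
        swap
        · exact absurd (by simp [hc]) (hnone e₁ he₁)
        set φ : Option V → V := fun o => o.getD d with hφ
        have hform : ∀ e ∈ M, ∃ x y, e = s(some x, some y) ∧ G.Adj x y := by
          intro e heM
          obtain h | ⟨c, hc, -⟩ := susp_edge G S (hsub heM)
          · exact h
          · exact absurd (by simp [hc]) (hnone e heM)
        have hretr : ∀ e ∈ M, Sym2.map some (Sym2.map φ e) = e := by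
          intro e heM
          obtain ⟨x, y, he, -⟩ := hform e heM
          rw [he, Sym2.map_pair_eq, Sym2.map_pair_eq]
          simp [hφ]
        have hinj : Set.InjOn (Sym2.map φ) ↑M := by
          intro a ha b hb hab
          rw [← hretr a ha, ← hretr b hb, hab]
        refine ⟨M.image (Sym2.map φ), ⟨⟨?_, ?_⟩, ?_⟩, Finset.card_image_of_injOn hinj⟩
        · intro e he
          simp only [Finset.coe_image, Set.mem_image, Finset.mem_coe] at he
          obtain ⟨f, hfM, rfl⟩ := he
          obtain ⟨x, y, hf, hxy⟩ := hform f hfM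
          rw [hf, Sym2.map_pair_eq]
          simpa [hφ] using hxy
        · intro e' he' f' hf' hef v hve hvf
          simp only [Finset.mem_image] at he' hf'
          obtain ⟨e, heM, rfl⟩ := he'
          obtain ⟨f, hfM, rfl⟩ := hf'
          have hef' : e ≠ f := fun h => hef (by rw [h])
          have h1 : some v ∈ e := by
            rw [← hretr e heM]; exact mem_map_some hve
          have h2 : some v ∈ f := by
            rw [← hretr f hfM]; exact mem_map_some hvf
          exact hdisj e heM f hfM hef' (some v) h1 h2
        · intro e he f' hf' g' hg' hfg ⟨⟨v, hve, hvf⟩, ⟨w, hwe, hwg⟩⟩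
          simp only [Finset.mem_image] at hf' hg'
          obtain ⟨f, hfM, rfl⟩ := hf'
          obtain ⟨g, hgM, rfl⟩ := hg'
          have hfg' : f ≠ g := fun h => hfg (by rw [h])
          refine hind (Sym2.map some e) (susp_edge_of G S he) f hfM g hgM hfg'
            ⟨⟨some v, mem_map_some hve, ?_⟩, ⟨some w, mem_map_some hwe, ?_⟩⟩
          · rw [← hretr f hfM]; exact mem_map_some hvf
          · rw [← hretr g hgM]; exact mem_map_some hwg
    · rintro ⟨M, ⟨⟨hsub, hdisj⟩, hind⟩, rfl⟩
      have hinj : Function.Injective (Sym2.map (some : V → Option V)) :=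
        Sym2.map.injective (Option.some_injective V)
      refine ⟨M.image (Sym2.map some), ⟨⟨?_, ?_⟩, ?_⟩,
        Finset.card_image_of_injective M hinj⟩
      · intro e he
        simp only [Finset.coe_image, Set.mem_image, Finset.mem_coe] at he
        obtain ⟨f, hfM, rfl⟩ := he
        exact susp_edge_of G S (hsub hfM)
      · intro e' he' f' hf' hef v hve hvf
        simp only [Finset.mem_image] at he' hf'
        obtain ⟨e, heM, rfl⟩ := he'
        obtain ⟨f, hfM, rfl⟩ := hf'
        have hef' : e ≠ f := fun h => hef (by rw [h])
        obtain ⟨u, hue, rfl⟩ := Sym2.mem_map.mp hve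
        exact hdisj e heM f hfM hef' u hue (mem_of_map_some hvf)
      · intro e he f' hf' g' hg' hfg ⟨⟨v, hve, hvf⟩, ⟨w, hwe, hwg⟩⟩
        simp only [Finset.mem_image] at hf' hg'
        obtain ⟨f, hfM, rfl⟩ := hf'
        obtain ⟨g, hgM, rfl⟩ := hg'
        have hfg' : f ≠ g := fun h => hfg (by rw [h])
        obtain ⟨v', hvf', rfl⟩ := Sym2.mem_map.mp hvf
        obtain ⟨w', hwg', rfl⟩ := Sym2.mem_map.mp hwg
        obtain ⟨x, y, rfl, hxy⟩ | ⟨c, rfl, -⟩ := susp_edge G S he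
        · have hv' : v' ∈ s(x, y) := mem_of_map_some (by rwa [Sym2.map_pair_eq])
          have hw' : w' ∈ s(x, y) := mem_of_map_some (by rwa [Sym2.map_pair_eq])
          exact hind s(x, y) hxy f hfM g hgM hfg' ⟨⟨v', hv', hvf'⟩, ⟨w', hw', hwg'⟩⟩
        · have hv' : v' = c := by simpa using hve
          have hw' : w' = c := by simpa using hwe
          rw [hv'] at hvf'; rw [hw'] at hwg'
          exact hdisj f hfM g hgM hfg' c hvf' hwg'
  unfold indMatchNum
  rw [key]
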